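/- Let R be the ring of integers of a number field K. Every nonzero fractional ideal 𝔞 of K can be written as 𝔞 = aR ∩ cR for suitable nonzero elements a, c ∈ K. -/

import Mathlib

open FractionalIdeal

section Aux

open Ideal UniqueFactorizationMonoid

variable {R : Type*} [CommRing R] [IsDedekindDomain R]

/-- Approximation: there is an element of `I` avoiding `I * P` for every prime `P ⊇ J`. -/
lemma aux_exists_avoid (I J : Ideal R) (hI : I ≠ ⊥) (hJ0 : J ≠ ⊥) (hJ : J ≠ ⊤) :
    ∃ c ∈ I, c ≠ 0 ∧ ∀ P : Ideal R, P.IsPrime → J ≤ P → c ∉ I * P := by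
  classical
  set S : Finset (Ideal R) := (normalizedFactors J).toFinset with hS
  have hmemS : ∀ P : Ideal R, P.IsPrime → J ≤ P → P ∈ S := by
    intro P hP hJP
    have hP0 : P ≠ ⊥ := fun h => hJ0 (le_bot_iff.mp (h ▸ hJP))
    have hPirr : Irreducible P := (Ideal.prime_of_isPrime hP0 hP).irreducible
    obtain ⟨q, hq, hassoc⟩ := exists_mem_normalizedFactors_of_dvd hJ0 hPirr
      (Ideal.dvd_iff_le.mpr hJP)
    rw [hS, Multiset.mem_toFinset]
    rwa [associated_iff_eq.mp hassoc]
  have hSprime : ∀ p ∈ S, Prime p := fun p hp =>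
    prime_of_normalized_factor p (Multiset.mem_toFinset.mp hp)
  obtain ⟨M, hM, hJM⟩ := Ideal.exists_le_maximal J hJ
  have hMS : M ∈ S := hmemS M hM.isPrime hJM
  have key : ∀ p ∈ S, ∃ x, x ∈ I * ∏ q ∈ S.erase p, q ∧ x ∉ I * p := by
    intro p hp
    have hnle : ¬ (I * ∏ q ∈ S.erase p, q ≤ I * p) := by
      intro hle
      have hdvd : p ∣ ∏ q ∈ S.erase p, q :=
        (mul_dvd_mul_iff_left hI).mp (Ideal.dvd_iff_le.mpr hle)
      obtain ⟨q, hq, hpq⟩ := (hSprime p hp).exists_mem_finset_dvd hdvd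
      have : p = q := associated_iff_eq.mp
        ((hSprime p hp).irreducible.associated_of_dvd
          (hSprime q (Finset.mem_of_mem_erase hq)).irreducible hpq)
      exact (Finset.ne_of_mem_erase hq) this.symm
    obtain ⟨x, hx1, hx2⟩ := SetLike.not_le_iff_exists.mp hnle
    exact ⟨x, hx1, hx2⟩
  choose! f hf1 hf2 using key
  set c : R := ∑ p ∈ S, f p with hc
  have hcI : c ∈ I := by
    refine Submodule.sum_mem _ fun p hp => ?_
    exact Ideal.mul_le_left (hf1 p hp)
  have hcP : ∀ p ∈ S, c ∉ I * p := by
    intro p hp hcmem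
    apply hf2 p hp
    have hrest : ∑ q ∈ S.erase p, f q ∈ I * p := by
      refine Submodule.sum_mem _ fun q hq => ?_
      have hqS : q ∈ S := Finset.mem_of_mem_erase hq
      have hpq : p ∈ S.erase q :=
        Finset.mem_erase.mpr ⟨fun h => Finset.ne_of_mem_erase hq h.symm, hp⟩
      have hdvd : p ∣ ∏ r ∈ S.erase q, r := Finset.dvd_prod_of_mem _ hpq
      have hle : (∏ r ∈ S.erase q, r) ≤ p := Ideal.le_of_dvd hdvd
      exact Ideal.mul_mono_right hle (hf1 q hqS)
    have : f p = c - ∑ q ∈ S.erase p, f q := by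
      rw [hc, ← Finset.add_sum_erase _ _ hp]
      ring
    rw [this]
    exact Submodule.sub_mem _ hcmem hrest
  have hc0 : c ≠ 0 := by
    intro h
    exact hcP M hMS (h ▸ Submodule.zero_mem _)
  exact ⟨c, hcI, hc0, fun P hP hJP => hcP P (hmemS P hP hJP)⟩

/-- 1.5-generation in Dedekind domains: given nonzero `b ∈ I`, `I` is generated by `b`
together with one more element. -/
lemma aux_exists_sup_span_eq (I : Ideal R) (hI : I ≠ ⊥) {b : R} (hb : b ∈ I) (hb0 : b ≠ 0) :
    ∃ c : R, c ≠ 0 ∧ Ideal.span {b} ⊔ Ideal.span {c} = I := by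
  obtain ⟨J, hJ⟩ := Ideal.dvd_iff_le.mpr ((Ideal.span_singleton_le_iff_mem _).mpr hb)
  have hJ0 : J ≠ ⊥ := by
    intro h
    rw [h, Ideal.mul_bot] at hJ
    exact hb0 (Ideal.span_singleton_eq_bot.mp hJ)
  by_cases hJtop : J = ⊤
  · refine ⟨b, hb0, ?_⟩
    rw [sup_idem, hJ, hJtop, Ideal.mul_top]
  · obtain ⟨c, hcI, hc0, hcP⟩ := aux_exists_avoid I J hI hJ0 hJtop
    obtain ⟨J', hJ'⟩ := Ideal.dvd_iff_le.mpr ((Ideal.span_singleton_le_iff_mem _).mpr hcI)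
    have hsup : J ⊔ J' = ⊤ := by
      by_contra h
      obtain ⟨M, hM, hle⟩ := Ideal.exists_le_maximal _ h
      refine hcP M hM.isPrime (le_trans le_sup_left hle) ?_
      have : Ideal.span {c} ≤ I * M := by
        rw [hJ']
        exact Ideal.mul_mono_right (le_trans le_sup_right hle)
      exact this (Ideal.mem_span_singleton_self c)
    refine ⟨c, hc0, ?_⟩
    rw [hJ, hJ', ← Ideal.mul_sup, hsup, Ideal.mul_top]

end Aux

section InvAdd

variable {R : Type*} [CommRing R] [IsDomain R] {K : Type*} [Field K] [Algebra R K]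
  [IsFractionRing R K]

lemma aux_inv_add_eq_inf (I J : FractionalIdeal (nonZeroDivisors R) K) (hI : I ≠ 0) (hJ : J ≠ 0) :
    (I + J)⁻¹ = I⁻¹ ⊓ J⁻¹ := by
  have hIJ : I + J ≠ 0 := by
    intro h
    apply hI
    have : I ≤ I + J := by rw [← sup_eq_add]; exact le_sup_left
    exact FractionalIdeal.le_zero_iff.mp (h ▸ this)
  apply le_antisymm
  · refine le_inf ?_ ?_
    · exact inv_anti_mono hI hIJ (by rw [← sup_eq_add]; exact le_sup_left)
    · exact inv_anti_mono hJ hIJ (by rw [← sup_eq_add]; exact le_sup_right)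
  · intro x hx
    have hxI : x ∈ I⁻¹ := inf_le_left (α := FractionalIdeal (nonZeroDivisors R) K) hx
    have hxJ : x ∈ J⁻¹ := inf_le_right (α := FractionalIdeal (nonZeroDivisors R) K) hx
    rw [mem_inv_iff hIJ]
    intro y hy
    obtain ⟨i, hi, j, hj, rfl⟩ := (mem_add I J y).mp hy
    rw [mul_add]
    exact Submodule.add_mem _ ((mem_inv_iff hI).mp hxI i hi) ((mem_inv_iff hJ).mp hxJ j hj)

end InvAdd

/-- Every nonzero fractional ideal of a number field is the intersection
of two principal fractional ideals. -/
theorem statement7 (K : Type*) [Field K] [NumberField K]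
    (𝔞 : FractionalIdeal (nonZeroDivisors (NumberField.RingOfIntegers K)) K) (h𝔞 : 𝔞 ≠ 0) :
    ∃ a c : K, a ≠ 0 ∧ c ≠ 0 ∧
      𝔞 = spanSingleton (nonZeroDivisors (NumberField.RingOfIntegers K)) a
        ⊓ spanSingleton (nonZeroDivisors (NumberField.RingOfIntegers K)) c := by
  set R := NumberField.RingOfIntegers K
  have h𝔟0 : 𝔞⁻¹ ≠ 0 := inv_ne_zero h𝔞
  obtain ⟨d, I₀, hd0, h𝔟⟩ := exists_eq_spanSingleton_mul (𝔞⁻¹)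
  have hdK : algebraMap R K d ≠ 0 := by
    simpa using (map_ne_zero_iff _ (IsFractionRing.injective R K)).mpr hd0
  have hI₀ : (I₀ : FractionalIdeal (nonZeroDivisors R) K) ≠ 0 := by
    intro h
    apply h𝔟0
    rw [h𝔟, h, mul_zero]
  have hI₀' : I₀ ≠ ⊥ := by
    intro h
    exact hI₀ (by rw [h]; simp)
  obtain ⟨b, hbI, hb0⟩ := Submodule.exists_mem_ne_zero_of_ne_bot hI₀'
  obtain ⟨c₀, hc00, hsup⟩ := aux_exists_sup_span_eq I₀ hI₀' hbI hb0
  have hbK : algebraMap R K b ≠ 0 :=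
    (map_ne_zero_iff _ (IsFractionRing.injective R K)).mpr hb0
  have hcK : algebraMap R K c₀ ≠ 0 :=
    (map_ne_zero_iff _ (IsFractionRing.injective R K)).mpr hc00
  set u : K := (algebraMap R K d)⁻¹ * algebraMap R K b with hu
  set v : K := (algebraMap R K d)⁻¹ * algebraMap R K c₀ with hv
  have hu0 : u ≠ 0 := mul_ne_zero (inv_ne_zero hdK) hbK
  have hv0 : v ≠ 0 := mul_ne_zero (inv_ne_zero hdK) hcK
  have hinv : 𝔞⁻¹ = spanSingleton (nonZeroDivisors R) u + spanSingleton (nonZeroDivisors R) v := by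
    rw [h𝔟, ← hsup, coeIdeal_sup, mul_add, coeIdeal_span_singleton, coeIdeal_span_singleton,
      spanSingleton_mul_spanSingleton, spanSingleton_mul_spanSingleton]
  refine ⟨u⁻¹, v⁻¹, inv_ne_zero hu0, inv_ne_zero hv0, ?_⟩
  have hsu : spanSingleton (nonZeroDivisors R) u ≠ 0 := spanSingleton_ne_zero_iff.mpr hu0
  have hsv : spanSingleton (nonZeroDivisors R) v ≠ 0 := spanSingleton_ne_zero_iff.mpr hv0
  calc 𝔞 = (𝔞⁻¹)⁻¹ := (inv_inv 𝔞).symm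
    _ = (spanSingleton (nonZeroDivisors R) u + spanSingleton (nonZeroDivisors R) v)⁻¹ := by
        rw [hinv]
    _ = (spanSingleton (nonZeroDivisors R) u)⁻¹ ⊓ (spanSingleton (nonZeroDivisors R) v)⁻¹ :=
        aux_inv_add_eq_inf _ _ hsu hsv
    _ = spanSingleton (nonZeroDivisors R) u⁻¹ ⊓ spanSingleton (nonZeroDivisors R) v⁻¹ := by
        rw [spanSingleton_inv, spanSingleton_inv]
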